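/- Let d = 1, n = 2, Ω = [-1,1], η(x_1,x_2) = (x_1-x_2, (x_1-x_2)(x_1+x_2), (x_1-x_2)(x_1²+x_2²)), and f(x_1,x_2) = |x_1| - |x_2|. Then any function g : η(Ω²) → ℝ with f = g ∘ η is not Lipschitz continuous: specifically, with x = (2ε,0) and x' = (ε,-ε), |g(η(x)) - g(η(x'))| / ‖η(x) - η(x')‖ = 2ε / ‖(0,4ε²,4ε³)‖ → ∞ as ε → 0+. -/

import Mathlib

open Filter

/-- Counterexample for Lipschitz continuity: for `f(x₁,x₂) = |x₁| - |x₂|` and the explicit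
`η`, any `g` on `η(Ω²)` with `f = g ∘ η` fails to be Lipschitz; the difference quotient along
`x = (2ε,0)`, `x' = (ε,-ε)` blows up as `ε → 0⁺`. -/
theorem counterexample_lipschitz
    (η : ℝ × ℝ → EuclideanSpace ℝ (Fin 3))
    (hη : ∀ x : ℝ × ℝ, η x = (WithLp.equiv 2 (Fin 3 → ℝ)).symm
      ![x.1 - x.2, (x.1 - x.2) * (x.1 + x.2), (x.1 - x.2) * (x.1 ^ 2 + x.2 ^ 2)])
    (f : ℝ × ℝ → ℝ) (hf : ∀ x : ℝ × ℝ, f x = |x.1| - |x.2|)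
    (D : Set (ℝ × ℝ)) (hD : D = Set.Icc (-1 : ℝ) 1 ×ˢ Set.Icc (-1 : ℝ) 1)
    (g : EuclideanSpace ℝ (Fin 3) → ℝ) (hg : ∀ x ∈ D, g (η x) = f x) :
    (∀ K : NNReal, ¬LipschitzOnWith K g (η '' D)) ∧
      Tendsto (fun ε : ℝ =>
          |g (η (2 * ε, 0)) - g (η (ε, -ε))| / ‖η (2 * ε, 0) - η (ε, -ε)‖)
        (nhdsWithin 0 (Set.Ioi 0)) atTop := by
  have key : ∀ ε : ℝ, 0 < ε → ε ≤ 1/2 →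
      (2*ε, (0:ℝ)) ∈ D ∧ ((ε, -ε) : ℝ × ℝ) ∈ D ∧
      ‖η (2*ε,0) - η (ε,-ε)‖ ≤ 8*ε^2 ∧ 0 < ‖η (2*ε,0) - η (ε,-ε)‖ ∧
      |g (η (2*ε,0)) - g (η (ε,-ε))| = 2*ε := by
    intro ε hε hε2
    have hmem1 : (2*ε, (0:ℝ)) ∈ D := by
      rw [hD]; constructor <;> simp <;> constructor <;> nlinarith
    have hmem2 : ((ε, -ε) : ℝ × ℝ) ∈ D := by
      rw [hD]; constructor <;> simp <;> constructor <;> nlinarith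
    have hnorm : ‖η (2*ε,0) - η (ε,-ε)‖ = Real.sqrt (16*ε^4 + 16*ε^6) := by
      rw [hη, hη, EuclideanSpace.norm_eq]
      simp [Fin.sum_univ_three, WithLp.equiv_symm_apply]
      ring_nf
    have hnum : |g (η (2*ε,0)) - g (η (ε,-ε))| = 2*ε := by
      rw [hg _ hmem1, hg _ hmem2, hf, hf]
      simp [abs_of_pos hε, abs_of_pos (by linarith : (0:ℝ) < 2*ε)]
    refine ⟨hmem1, hmem2, ?_, ?_, hnum⟩
    · rw [hnorm]
      have hsq : ε^2 ≤ 1/4 := by nlinarith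
      have : (16*ε^4 + 16*ε^6 : ℝ) ≤ (8*ε^2)^2 := by nlinarith [mul_le_mul_of_nonneg_left hsq (show (0:ℝ) ≤ 16*ε^4 by positivity)]
      calc Real.sqrt (16*ε^4 + 16*ε^6) ≤ Real.sqrt ((8*ε^2)^2) :=
            Real.sqrt_le_sqrt this
        _ = 8*ε^2 := Real.sqrt_sq (by positivity)
    · rw [hnorm]
      exact Real.sqrt_pos.2 (by positivity)
  have htop : Tendsto (fun ε : ℝ =>
      |g (η (2 * ε, 0)) - g (η (ε, -ε))| / ‖η (2 * ε, 0) - η (ε, -ε)‖)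
      (nhdsWithin 0 (Set.Ioi 0)) atTop := by
    have h1 : Tendsto (fun ε : ℝ => (4*ε)⁻¹) (nhdsWithin 0 (Set.Ioi 0)) atTop := by
      apply Tendsto.inv_tendsto_nhdsGT_zero
      apply tendsto_nhdsWithin_of_tendsto_nhds_of_eventually_within
      · have : Tendsto (fun ε : ℝ => 4*ε) (nhdsWithin 0 (Set.Ioi 0)) (nhds (4*0)) :=
          (tendsto_const_nhds.mul (tendsto_nhdsWithin_of_tendsto_nhds tendsto_id))
        simpa using this
      · filter_upwards [self_mem_nhdsWithin] with ε (hε : ε ∈ Set.Ioi 0)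
        exact Set.mem_Ioi.2 (by simp at hε; linarith)
    apply tendsto_atTop_mono' _ _ h1
    filter_upwards [Ioc_mem_nhdsGT_of_mem (by norm_num : (0:ℝ) ∈ Set.Ico 0 (1/2))]
      with ε hε
    obtain ⟨hε1, hε2⟩ := hε
    obtain ⟨h1', h2', hle, hpos, hnum⟩ := key ε hε1 hε2
    rw [hnum]
    rw [inv_eq_one_div, div_le_div_iff₀ (by linarith : (0:ℝ) < 4*ε) hpos]
    calc 1 * ‖η (2*ε,0) - η (ε,-ε)‖ ≤ 8*ε^2 := by linarith
      _ = 2*ε*(4*ε) := by ring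
  refine ⟨?_, htop⟩
  intro K hK
  have h1 := htop.eventually_gt_atTop (K : ℝ)
  have h2 : ∀ᶠ ε in nhdsWithin (0:ℝ) (Set.Ioi 0), ε ∈ Set.Ioc 0 (1/2) :=
    Ioc_mem_nhdsGT_of_mem (by norm_num : (0:ℝ) ∈ Set.Ico 0 (1/2))
  obtain ⟨ε, hgt, hmem⟩ := (h1.and h2).exists
  obtain ⟨hx, hx', hle, hpos, hnum⟩ := key ε hmem.1 hmem.2
  have hd := hK.dist_le_mul (η (2*ε,0)) (Set.mem_image_of_mem η hx)
    (η (ε,-ε)) (Set.mem_image_of_mem η hx')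
  rw [Real.dist_eq, dist_eq_norm] at hd
  have : |g (η (2*ε,0)) - g (η (ε,-ε))| / ‖η (2*ε,0) - η (ε,-ε)‖ ≤ K := by
    rw [div_le_iff₀ hpos]; exact hd
  exact absurd (lt_of_lt_of_le hgt this) (lt_irrefl _)
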